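/- arXiv:1911.01979 — 2 statements merged into one kernel-verified Lean document; each statement's English description precedes it below -/
import Mathlib

section
/- Let (λ^{(N)}_s)_{s=1,...,m_N} be triangular arrays of nonnegative reals in decreasing order with Σ_s (λ^{(N)}_s)² > 0, and β^{(N)}_s = λ^{(N)}_s / sqrt(Σ_ℓ (λ^{(N)}_ℓ)²), f_N = (Σ_s (λ^{(N)}_s)²)³/(Σ_s (λ^{(N)}_s)³)². Then β^{(N)}_1 → 0 if and only if f_N → ∞. -/
open Filter

lemma key_facts (n : ℕ) (hn : 0 < n) (l : Fin n → ℝ)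
    (hnn : ∀ s, 0 ≤ l s) (hmono : ∀ s t : Fin n, s ≤ t → l t ≤ l s)
    (hpos : 0 < ∑ s, l s ^ 2) :
    0 < l ⟨0, hn⟩ ∧ l ⟨0, hn⟩ ^ 2 ≤ ∑ s, l s ^ 2 ∧
      l ⟨0, hn⟩ ^ 3 ≤ ∑ s, l s ^ 3 ∧ (∑ s, l s ^ 3) ≤ l ⟨0, hn⟩ * ∑ s, l s ^ 2 := by
  have hle : ∀ s : Fin n, l s ≤ l ⟨0, hn⟩ := by
    intro s
    exact hmono ⟨0, hn⟩ s (by simp [Fin.le_def])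
  have hl0 : 0 < l ⟨0, hn⟩ := by
    by_contra h
    push_neg at h
    have hz : ∀ s : Fin n, l s = 0 := fun s => le_antisymm (le_trans (hle s) h) (hnn s)
    simp [hz] at hpos
  refine ⟨hl0, ?_, ?_, ?_⟩
  · exact Finset.single_le_sum (fun s _ => sq_nonneg (l s)) (Finset.mem_univ _)
  · exact Finset.single_le_sum (fun s _ => pow_nonneg (hnn s) 3) (Finset.mem_univ _)
  · rw [Finset.mul_sum]
    refine Finset.sum_le_sum fun s _ => ?_
    have : l s ^ 3 = l s * l s ^ 2 := by ring
    rw [this]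
    exact mul_le_mul_of_nonneg_right (hle s) (sq_nonneg _)

/-- For triangular arrays of decreasing nonnegative reals with positive sum of squares,
the largest standardized eigenvalue `β₁^{(N)}` tends to `0` iff `f_N` tends to `∞`. -/
theorem beta_one_to_zero_iff_f_to_infty (m : ℕ → ℕ) (hm : ∀ N, 0 < m N)
    (l : (N : ℕ) → Fin (m N) → ℝ)
    (hnn : ∀ N s, 0 ≤ l N s) (hmono : ∀ N, ∀ s t : Fin (m N), s ≤ t → l N t ≤ l N s)
    (hpos : ∀ N, 0 < ∑ s, (l N s) ^ 2) :
    Tendsto (fun N => l N ⟨0, hm N⟩ / Real.sqrt (∑ ℓ, (l N ℓ) ^ 2)) atTop (nhds 0) ↔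
    Tendsto (fun N => (∑ s, (l N s) ^ 2) ^ 3 / (∑ s, (l N s) ^ 3) ^ 2) atTop atTop := by
  set L : ℕ → ℝ := fun N => l N ⟨0, hm N⟩ with hL
  set S2 : ℕ → ℝ := fun N => ∑ s, (l N s) ^ 2 with hS2
  set S3 : ℕ → ℝ := fun N => ∑ s, (l N s) ^ 3 with hS3
  set b : ℕ → ℝ := fun N => L N / Real.sqrt (S2 N) with hb
  set f : ℕ → ℝ := fun N => S2 N ^ 3 / S3 N ^ 2 with hf
  have hk : ∀ N, 0 < L N ∧ L N ^ 2 ≤ S2 N ∧ L N ^ 3 ≤ S3 N ∧ S3 N ≤ L N * S2 N :=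
    fun N => key_facts (m N) (hm N) (l N) (hnn N) (hmono N) (hpos N)
  have hLpos : ∀ N, 0 < L N := fun N => (hk N).1
  have hS2pos : ∀ N, 0 < S2 N := hpos
  have hS3pos : ∀ N, 0 < S3 N := fun N => lt_of_lt_of_le (pow_pos (hLpos N) 3) (hk N).2.2.1
  have hfpos : ∀ N, 0 < f N := fun N => div_pos (pow_pos (hS2pos N) 3) (pow_pos (hS3pos N) 2)
  have hbpos : ∀ N, 0 < b N := fun N => div_pos (hLpos N) (Real.sqrt_pos.2 (hS2pos N))
  have hsq : ∀ N, Real.sqrt (S2 N) ^ 2 = S2 N := fun N => Real.sq_sqrt (hS2pos N).le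
  have hb2 : ∀ N, b N ^ 2 = L N ^ 2 / S2 N := by
    intro N
    rw [hb, div_pow, hsq]
  have hb6 : ∀ N, b N ^ 6 = L N ^ 6 / S2 N ^ 3 := by
    intro N
    have : b N ^ 6 = (b N ^ 2) ^ 3 := by ring
    rw [this, hb2, div_pow]
    ring_nf
  -- key inequality 1: S2/L² ≤ f
  have hineq1 : ∀ N, S2 N / L N ^ 2 ≤ f N := by
    intro N
    have h1 : S3 N ^ 2 ≤ (L N * S2 N) ^ 2 :=
      pow_le_pow_left₀ (Finset.sum_nonneg fun s _ => pow_nonneg (hnn N s) 3) (hk N).2.2.2 2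
    have h2 : f N ≥ S2 N ^ 3 / (L N * S2 N) ^ 2 :=
      div_le_div_of_nonneg_left (pow_nonneg (hS2pos N).le 3)
        (pow_pos (hS3pos N) 2) h1
    have h3 : S2 N ^ 3 / (L N * S2 N) ^ 2 = S2 N / L N ^ 2 := by
      have hL0 : L N ≠ 0 := (hLpos N).ne'
      have hS0 : S2 N ≠ 0 := (hS2pos N).ne'
      field_simp
    linarith [h2, h3.symm ▸ h2]
  -- key inequality 2: f ≤ S2³/L⁶
  have hineq2 : ∀ N, f N ≤ S2 N ^ 3 / L N ^ 6 := by
    intro N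
    have h1 : L N ^ 6 ≤ S3 N ^ 2 := by
      have : L N ^ 6 = (L N ^ 3) ^ 2 := by ring
      rw [this]
      exact pow_le_pow_left₀ (pow_nonneg (hLpos N).le 3) (hk N).2.2.1 2
    exact div_le_div_of_nonneg_left (pow_nonneg (hS2pos N).le 3) (pow_pos (hLpos N) 6) h1
  constructor
  · -- b → 0 ⟹ f → ∞
    intro h
    have hb2t : Tendsto (fun N => b N ^ 2) atTop (nhds 0) := by
      have := h.pow 2
      simpa using this
    have hb2in : Tendsto (fun N => b N ^ 2) atTop (nhdsWithin 0 (Set.Ioi 0)) := by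
      rw [tendsto_nhdsWithin_iff]
      exact ⟨hb2t, Eventually.of_forall fun N => pow_pos (hbpos N) 2⟩
    have hinv : Tendsto (fun N => (b N ^ 2)⁻¹) atTop atTop :=
      hb2in.inv_tendsto_nhdsGT_zero
    refine tendsto_atTop_mono ?_ hinv
    intro N
    have : (b N ^ 2)⁻¹ = S2 N / L N ^ 2 := by
      rw [hb2, inv_div]
    rw [this]
    exact hineq1 N
  · -- f → ∞ ⟹ b → 0
    intro h
    have hinvf : Tendsto (fun N => (f N)⁻¹) atTop (nhds 0) :=
      tendsto_inv_atTop_zero.comp h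
    have hb6le : ∀ N, b N ^ 6 ≤ (f N)⁻¹ := by
      intro N
      rw [hb6]
      have : L N ^ 6 / S2 N ^ 3 = (S2 N ^ 3 / L N ^ 6)⁻¹ := by
        rw [inv_div]
      rw [this]
      exact inv_anti₀ (hfpos N) (hineq2 N)
    have hb6t : Tendsto (fun N => b N ^ 6) atTop (nhds 0) :=
      squeeze_zero (fun N => pow_nonneg (hbpos N).le 6) hb6le hinvf
    rw [NormedAddCommGroup.tendsto_nhds_zero] at hb6t ⊢
    intro ε hε
    filter_upwards [hb6t (ε ^ 6) (pow_pos hε 6)] with N hN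
    rw [Real.norm_eq_abs, abs_of_pos (pow_pos (hbpos N) 6)] at hN
    rw [Real.norm_eq_abs, abs_of_pos (hbpos N)]
    exact lt_of_pow_lt_pow_left₀ 6 hε.le hN
end

section
/- If two functions of the form t ↦ ∏_{ℓ=1}^{r} (1 − √2 b_ℓ t) exp(−√2 b_ℓ t) and t ↦ ∏_{ℓ=1}^{r'} (1 − √2 b'_ℓ t) exp(−√2 b'_ℓ t), with b₁ ≥ ... ≥ b_r > 0 and b'₁ ≥ ... ≥ b'_{r'} > 0, agree for all real t, then r = r' and b_ℓ = b'_ℓ for all ℓ. -/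
private lemma sqrt2_pos : (0:ℝ) < Real.sqrt 2 := Real.sqrt_pos.2 (by norm_num)

/-- If the product vanishes at `t`, some affine factor vanishes. -/
private lemma exists_factor_zero {n : ℕ} (c : Fin n → ℝ) (t : ℝ)
    (h : (∏ ℓ, (1 - Real.sqrt 2 * c ℓ * t) * Real.exp (-(Real.sqrt 2 * c ℓ * t))) = 0) :
    ∃ ℓ, 1 - Real.sqrt 2 * c ℓ * t = 0 := by
  obtain ⟨ℓ, -, hℓ⟩ := Finset.prod_eq_zero_iff.1 h
  rcases mul_eq_zero.1 hℓ with h1 | h2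
  · exact ⟨ℓ, h1⟩
  · exact absurd h2 (Real.exp_ne_zero _)

/-- The product vanishes at the reciprocal of any `√2 * c ℓ`. -/
private lemma prod_zero_at {n : ℕ} (c : Fin n → ℝ) (hc : ∀ ℓ, 0 < c ℓ) (j : Fin n) :
    (∏ ℓ, (1 - Real.sqrt 2 * c ℓ * (1 / (Real.sqrt 2 * c j))) *
      Real.exp (-(Real.sqrt 2 * c ℓ * (1 / (Real.sqrt 2 * c j))))) = 0 := by
  apply Finset.prod_eq_zero (Finset.mem_univ j)
  have hj := hc j
  have hne : Real.sqrt 2 * c j ≠ 0 := by positivity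
  have : Real.sqrt 2 * c j * (1 / (Real.sqrt 2 * c j)) = 1 := by field_simp
  rw [this]
  ring

/-- From the hypothesis, the top weight on the left is at most the one on the right. -/
private lemma head_le {m n : ℕ} (b : Fin (m+1) → ℝ) (b' : Fin (n+1) → ℝ)
    (hb : ∀ ℓ, 0 < b ℓ)
    (hb'mono : ∀ i j : Fin (n+1), i ≤ j → b' j ≤ b' i)
    (h : ∀ t : ℝ,
      ∏ ℓ, (1 - Real.sqrt 2 * b ℓ * t) * Real.exp (-(Real.sqrt 2 * b ℓ * t)) =
      ∏ ℓ, (1 - Real.sqrt 2 * b' ℓ * t) * Real.exp (-(Real.sqrt 2 * b' ℓ * t))) :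
    b 0 ≤ b' 0 := by
  set t₀ : ℝ := 1 / (Real.sqrt 2 * b 0) with ht₀
  have h0 := h t₀
  rw [prod_zero_at b hb 0] at h0
  obtain ⟨j, hj⟩ := exists_factor_zero b' t₀ h0.symm
  have hne : Real.sqrt 2 * b 0 ≠ 0 := by have := hb 0; positivity
  have hbj : b' j = b 0 := by
    have h2 : Real.sqrt 2 * b' j * t₀ = 1 := by linarith
    rw [ht₀] at h2
    field_simp at h2
    exact (div_eq_one_iff_eq (hb 0).ne').1 h2
  calc b 0 = b' j := hbj.symm
    _ ≤ b' 0 := hb'mono 0 j (Fin.zero_le j)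

/-- Nonempty product can't equal the empty product. -/
private lemma not_empty {m : ℕ} (b : Fin (m+1) → ℝ) (hb : ∀ ℓ, 0 < b ℓ)
    (h : ∀ t : ℝ,
      ∏ ℓ, (1 - Real.sqrt 2 * b ℓ * t) * Real.exp (-(Real.sqrt 2 * b ℓ * t)) = 1) :
    False := by
  have h0 := h (1 / (Real.sqrt 2 * b 0))
  rw [prod_zero_at b hb 0] at h0
  norm_num at h0

private lemma cont {n : ℕ} (c : Fin n → ℝ) :
    Continuous (fun t : ℝ =>
      ∏ ℓ, (1 - Real.sqrt 2 * c ℓ * t) * Real.exp (-(Real.sqrt 2 * c ℓ * t))) := by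
  apply continuous_finset_prod
  intro i _
  fun_prop

private lemma key : ∀ (r r' : ℕ) (b : Fin r → ℝ) (b' : Fin r' → ℝ),
    (∀ ℓ, 0 < b ℓ) → (∀ ℓ, 0 < b' ℓ) →
    (∀ i j : Fin r, i ≤ j → b j ≤ b i) →
    (∀ i j : Fin r', i ≤ j → b' j ≤ b' i) →
    (∀ t : ℝ,
      ∏ ℓ, (1 - Real.sqrt 2 * b ℓ * t) * Real.exp (-(Real.sqrt 2 * b ℓ * t)) =
      ∏ ℓ, (1 - Real.sqrt 2 * b' ℓ * t) * Real.exp (-(Real.sqrt 2 * b' ℓ * t))) →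
    r = r' ∧ ∀ (ℓ : ℕ) (hℓ : ℓ < r) (hℓ' : ℓ < r'), b ⟨ℓ, hℓ⟩ = b' ⟨ℓ, hℓ'⟩ := by
  intro r
  induction r with
  | zero =>
    intro r' b b' hb hb' hbm hb'm h
    match r' with
    | 0 => exact ⟨rfl, fun ℓ hℓ _ => absurd hℓ (Nat.not_lt_zero ℓ)⟩
    | n + 1 =>
      exfalso
      apply not_empty b' hb'
      intro t
      have := (h t).symm
      simpa using this
  | succ m ih =>
    intro r' b b' hb hb' hbm hb'm h
    match r' with
    | 0 =>
      exfalso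
      apply not_empty b hb
      intro t
      have := h t
      simpa using this
    | n + 1 =>
      have hb00 : b 0 = b' 0 :=
        le_antisymm (head_le b b' hb hb'm h)
          (head_le b' b hb' hbm (fun t => (h t).symm))
      -- cancel the common first factor
      set t₀ : ℝ := 1 / (Real.sqrt 2 * b 0) with ht₀
      have htail : ∀ t : ℝ,
          ∏ ℓ : Fin m, (1 - Real.sqrt 2 * (b ∘ Fin.succ) ℓ * t) *
            Real.exp (-(Real.sqrt 2 * (b ∘ Fin.succ) ℓ * t)) =
          ∏ ℓ : Fin n, (1 - Real.sqrt 2 * (b' ∘ Fin.succ) ℓ * t) *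
            Real.exp (-(Real.sqrt 2 * (b' ∘ Fin.succ) ℓ * t)) := by
        have heqon : Set.EqOn
            (fun t : ℝ => ∏ ℓ : Fin m, (1 - Real.sqrt 2 * (b ∘ Fin.succ) ℓ * t) *
              Real.exp (-(Real.sqrt 2 * (b ∘ Fin.succ) ℓ * t)))
            (fun t : ℝ => ∏ ℓ : Fin n, (1 - Real.sqrt 2 * (b' ∘ Fin.succ) ℓ * t) *
              Real.exp (-(Real.sqrt 2 * (b' ∘ Fin.succ) ℓ * t)))
            {t₀}ᶜ := by
          intro t ht
          have ht' : t ≠ t₀ := ht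
          have hfac : (1 - Real.sqrt 2 * b 0 * t) * Real.exp (-(Real.sqrt 2 * b 0 * t)) ≠ 0 := by
            apply mul_ne_zero _ (Real.exp_ne_zero _)
            intro hz
            apply ht'
            have hne : Real.sqrt 2 * b 0 ≠ 0 := by have := hb 0; positivity
            rw [ht₀]
            rw [eq_div_iff hne]
            linear_combination -hz
          have hh := h t
          rw [Fin.prod_univ_succ, Fin.prod_univ_succ, ← hb00] at hh
          exact mul_left_cancel₀ hfac hh
        have := Continuous.ext_on (dense_compl_singleton t₀)
          (cont (b ∘ Fin.succ)) (cont (b' ∘ Fin.succ)) heqon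
        exact fun t => congrFun this t
      obtain ⟨hmn, htl⟩ := ih n (b ∘ Fin.succ) (b' ∘ Fin.succ)
        (fun ℓ => hb _) (fun ℓ => hb' _)
        (fun i j hij => hbm _ _ (Fin.succ_le_succ_iff.2 hij))
        (fun i j hij => hb'm _ _ (Fin.succ_le_succ_iff.2 hij))
        htail
      refine ⟨by omega, ?_⟩
      intro ℓ hℓ hℓ'
      match ℓ with
      | 0 => exact hb00
      | ℓ + 1 =>
        have := htl ℓ (by omega) (by omega)
        simpa [Function.comp, Fin.succ] using this

/-- If `∏ (1 - √2 b_ℓ t) exp(-√2 b_ℓ t)` with positive decreasing weights agree for all `t`,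
then the numbers of factors and the weights coincide. -/
theorem factors_determined_by_product
    {r r' : ℕ} (b : Fin r → ℝ) (b' : Fin r' → ℝ)
    (hb : ∀ ℓ, 0 < b ℓ) (hb' : ∀ ℓ, 0 < b' ℓ)
    (hbmono : ∀ i j : Fin r, i ≤ j → b j ≤ b i)
    (hb'mono : ∀ i j : Fin r', i ≤ j → b' j ≤ b' i)
    (h : ∀ t : ℝ,
      ∏ ℓ, (1 - Real.sqrt 2 * b ℓ * t) * Real.exp (-(Real.sqrt 2 * b ℓ * t)) =
      ∏ ℓ, (1 - Real.sqrt 2 * b' ℓ * t) * Real.exp (-(Real.sqrt 2 * b' ℓ * t))) :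
    r = r' ∧ ∀ (ℓ : ℕ) (hℓ : ℓ < r) (hℓ' : ℓ < r'), b ⟨ℓ, hℓ⟩ = b' ⟨ℓ, hℓ'⟩ :=
  key r r' b b' hb hb' hbmono hb'mono h
end
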